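/- arXiv:2202.00746 — 5 statements merged into one kernel-verified Lean document; each statement's English description precedes it below -/
import Mathlib

section
/- Let A, B be N×N real matrices and D an N×M real matrix, and let 𝓡 be the associated enlarged Kalman matrix. If V is any subspace of ℝᴺ contained in Ker(Dᵀ) and invariant under both Aᵀ and Bᵀ, then V ⊆ Ker(𝓡ᵀ). Consequently Ker(𝓡ᵀ) is the largest subspace contained in Ker(Dᵀ) that is invariant under both Aᵀ and Bᵀ. -/
open Matrix

/-- The product of a word in the matrices `A` and `B`. -/
noncomputable def wordProd {R : Type} [CommRing R] {n : ℕ}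
    (A B : Matrix (Fin n) (Fin n) R) (w : List Bool) : Matrix (Fin n) (Fin n) R :=
  (w.map fun b => if b then A else B).prod

/-- `Ker(𝓡ᵀ)` for the enlarged Kalman matrix `𝓡 = (A^p B^q ⋯ A^r B^s D)_{p,q,…,r,s}`:
the set of `x` with `Dᵀ (Bᵀ)^s (Aᵀ)^r ⋯ (Bᵀ)^q (Aᵀ)^p x = 0` for all exponents. -/
noncomputable def kalmanKer {R : Type} [CommRing R] {N M : ℕ}
    (A B : Matrix (Fin N) (Fin N) R) (D : Matrix (Fin N) (Fin M) R) :
    Submodule R (Fin N → R) :=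
  ⨅ w : List Bool,
    LinearMap.ker (D.transpose.mulVecLin.comp (wordProd A.transpose B.transpose w).mulVecLin)

lemma wordProd_nil {R : Type} [CommRing R] {n : ℕ}
    (A B : Matrix (Fin n) (Fin n) R) : wordProd A B [] = 1 := rfl

lemma wordProd_cons {R : Type} [CommRing R] {n : ℕ}
    (A B : Matrix (Fin n) (Fin n) R) (b : Bool) (w : List Bool) :
    wordProd A B (b :: w) = (if b then A else B) * wordProd A B w := by
  simp [wordProd]

lemma wordProd_append {R : Type} [CommRing R] {n : ℕ}
    (A B : Matrix (Fin n) (Fin n) R) (w v : List Bool) :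
    wordProd A B (w ++ v) = wordProd A B w * wordProd A B v := by
  simp [wordProd]

lemma wordProd_mem {N : ℕ} (A B : Matrix (Fin N) (Fin N) ℝ)
    (V : Submodule ℝ (Fin N → ℝ))
    (hA : ∀ x ∈ V, A.transpose.mulVec x ∈ V)
    (hB : ∀ x ∈ V, B.transpose.mulVec x ∈ V)
    (w : List Bool) (x : Fin N → ℝ) (hx : x ∈ V) :
    (wordProd A.transpose B.transpose w).mulVec x ∈ V := by
  induction w with
  | nil => simpa [wordProd_nil] using hx
  | cons b t ih =>
    rw [wordProd_cons, ← mulVec_mulVec]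
    cases b
    · simpa using hB _ ih
    · simpa using hA _ ih

/-- any subspace `V ⊆ Ker(Dᵀ)` invariant under `Aᵀ` and `Bᵀ` satisfies
`V ⊆ Ker(𝓡ᵀ)`; consequently `Ker(𝓡ᵀ)` is the largest subspace contained in `Ker(Dᵀ)`
that is invariant under both `Aᵀ` and `Bᵀ`. -/
theorem kalmanKer_isGreatest {N M : ℕ}
    (A B : Matrix (Fin N) (Fin N) ℝ) (D : Matrix (Fin N) (Fin M) ℝ) :
    (∀ V : Submodule ℝ (Fin N → ℝ),
      V ≤ LinearMap.ker D.transpose.mulVecLin →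
      (∀ x ∈ V, A.transpose.mulVec x ∈ V) →
      (∀ x ∈ V, B.transpose.mulVec x ∈ V) →
      V ≤ kalmanKer A B D) ∧
    IsGreatest {V : Submodule ℝ (Fin N → ℝ) |
        V ≤ LinearMap.ker D.transpose.mulVecLin ∧
        (∀ x ∈ V, A.transpose.mulVec x ∈ V) ∧
        (∀ x ∈ V, B.transpose.mulVec x ∈ V)}
      (kalmanKer A B D) := by
  have key : ∀ V : Submodule ℝ (Fin N → ℝ),
      V ≤ LinearMap.ker D.transpose.mulVecLin →
      (∀ x ∈ V, A.transpose.mulVec x ∈ V) →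
      (∀ x ∈ V, B.transpose.mulVec x ∈ V) →
      V ≤ kalmanKer A B D := by
    intro V hD hA hB x hx
    rw [kalmanKer, Submodule.mem_iInf]
    intro w
    have := hD (wordProd_mem A B V hA hB w x hx)
    simpa [LinearMap.mem_ker] using this
  have mem_iff : ∀ x, x ∈ kalmanKer A B D ↔
      ∀ w : List Bool, D.transpose.mulVec ((wordProd A.transpose B.transpose w).mulVec x) = 0 := by
    intro x
    rw [kalmanKer, Submodule.mem_iInf]
    simp only [LinearMap.mem_ker, LinearMap.comp_apply, mulVecLin_apply]
  refine ⟨key, ⟨?_, ?_, ?_⟩, fun V hV => key V hV.1 hV.2.1 hV.2.2⟩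
  · intro x hx
    have := (mem_iff x).1 hx []
    simpa only [LinearMap.mem_ker, mulVecLin_apply, wordProd_nil, Matrix.one_mulVec] using this
  · intro x hx
    rw [mem_iff]
    intro w
    have := (mem_iff x).1 hx (w ++ [true])
    simpa [wordProd_append, wordProd_cons, wordProd_nil, ← mulVec_mulVec] using this
  · intro x hx
    rw [mem_iff]
    intro w
    have := (mem_iff x).1 hx (w ++ [false])
    simpa [wordProd_append, wordProd_cons, wordProd_nil, ← mulVec_mulVec] using this
end

section
/- Let A be an N×N real matrix and D an N×M real matrix. The Kalman rank condition rank(D, AD, …, A^{N−1}D) ≥ N − d holds if and only if every subspace of ℝᴺ contained in Ker(Dᵀ) and invariant under Aᵀ has dimension at most d. -/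
open Matrix

/-- The classical Kalman matrix `(D, AD, …, A^{N−1}D)`, an `N × (N·M)` matrix obtained by
horizontal concatenation of `D, AD, …, A^{N-1}D`. -/
noncomputable def kalmanMatrix {N M : ℕ} (A : Matrix (Fin N) (Fin N) ℝ)
    (D : Matrix (Fin N) (Fin M) ℝ) : Matrix (Fin N) (Fin N × Fin M) ℝ :=
  fun i kj => (A ^ (kj.1 : ℕ) * D) i kj.2

open Polynomial in
lemma kalman_aux_pow_card {N : ℕ} (B : Matrix (Fin N) (Fin N) ℝ) :
    B ^ N = ∑ k ∈ Finset.range N, (-(B.charpoly.coeff k)) • B ^ k := by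
  have hdeg : B.charpoly.natDegree = N := by
    simp [B.charpoly_natDegree_eq_dim]
  have h0 : ∑ i ∈ Finset.range (N + 1), B.charpoly.coeff i • B ^ i = 0 := by
    rw [← Polynomial.aeval_eq_sum_range' (n := N + 1) (by omega) B]
    exact B.aeval_self_charpoly
  rw [Finset.sum_range_succ] at h0
  have hcoe : B.charpoly.coeff N = 1 := by
    have := B.charpoly_monic.coeff_natDegree
    rwa [hdeg] at this
  rw [hcoe, one_smul] at h0
  have hBN : B ^ N = -∑ i ∈ Finset.range N, B.charpoly.coeff i • B ^ i := by
    linear_combination (norm := abel) h0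
  rw [hBN, ← Finset.sum_neg_distrib]
  simp [neg_smul]

lemma kalman_aux_sum_mulVec {N M : ℕ} {ι : Type*} (s : Finset ι)
    (f : ι → Matrix (Fin N) (Fin M) ℝ) (x : Fin M → ℝ) :
    (∑ i ∈ s, f i).mulVec x = ∑ i ∈ s, (f i).mulVec x := by
  induction s using Finset.cons_induction with
  | empty => simp
  | cons a s ha ih => simp [Finset.sum_cons, Matrix.add_mulVec, ih]

lemma kalman_mem_ker_iff {N M : ℕ} (A : Matrix (Fin N) (Fin N) ℝ)
    (D : Matrix (Fin N) (Fin M) ℝ) (x : Fin N → ℝ) :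
    (kalmanMatrix A D).transpose.mulVec x = 0 ↔
      ∀ k : Fin N, D.transpose.mulVec ((A.transpose ^ (k : ℕ)).mulVec x) = 0 := by
  have key : ∀ (k : Fin N) (j : Fin M),
      D.transpose.mulVec ((A.transpose ^ (k : ℕ)).mulVec x) j
        = (kalmanMatrix A D).transpose.mulVec x (k, j) := by
    intro k j
    have h1 : D.transpose * A.transpose ^ (k : ℕ) = (A ^ (k : ℕ) * D).transpose := by
      rw [transpose_mul, transpose_pow]
    rw [mulVec_mulVec, h1]
    simp [mulVec, transpose, dotProduct, kalmanMatrix, mul_comm]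
  constructor
  · intro h k
    funext j
    rw [key k j, h]
    rfl
  · intro h
    funext p
    rw [← key p.1 p.2, h p.1]
    rfl

/-- the Kalman rank condition `rank (D, AD, …, A^{N−1}D) ≥ N − d` holds iff
every subspace of `ℝᴺ` contained in `Ker(Dᵀ)` and invariant under `Aᵀ` has dimension
at most `d`. -/
theorem kalman_classical_rank_ge_iff {N M : ℕ} (d : ℕ)
    (A : Matrix (Fin N) (Fin N) ℝ) (D : Matrix (Fin N) (Fin M) ℝ) :
    N - d ≤ (kalmanMatrix A D).rank ↔
      ∀ V : Submodule ℝ (Fin N → ℝ),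
        V ≤ LinearMap.ker D.transpose.mulVecLin →
        (∀ x ∈ V, A.transpose.mulVec x ∈ V) →
        Module.finrank ℝ V ≤ d := by
  set K := kalmanMatrix A D with hK
  set S := LinearMap.ker K.transpose.mulVecLin with hS
  have hmem : ∀ x, x ∈ S ↔
      ∀ k : Fin N, D.transpose.mulVec ((A.transpose ^ (k : ℕ)).mulVec x) = 0 := by
    intro x
    rw [hS, LinearMap.mem_ker, mulVecLin_apply, kalman_mem_ker_iff]
  have hrankT : K.transpose.rank = K.rank := K.rank_transpose
  have hsum : K.rank + Module.finrank ℝ S = N := by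
    have h1 := LinearMap.finrank_range_add_finrank_ker K.transpose.mulVecLin
    simp only [Module.finrank_pi, Fintype.card_fin] at h1
    rw [← hrankT]
    exact h1
  have hrank_le : K.rank ≤ N := by omega
  constructor
  · intro hrank V hVD hVA
    have hpow : ∀ (n : ℕ) (x : Fin N → ℝ), x ∈ V → (A.transpose ^ n).mulVec x ∈ V := by
      intro n
      induction n with
      | zero => intro x hx; simpa using hx
      | succ n ih =>
        intro x hx
        have h2 : (A.transpose ^ (n + 1)).mulVec x
            = A.transpose.mulVec ((A.transpose ^ n).mulVec x) := by
          rw [mulVec_mulVec, ← pow_succ']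
        rw [h2]
        exact hVA _ (ih x hx)
    have hVS : V ≤ S := by
      intro x hx
      rw [hmem]
      intro k
      have := hVD (hpow k x hx)
      rwa [LinearMap.mem_ker, mulVecLin_apply] at this
    have := Submodule.finrank_mono hVS
    omega
  · intro h
    have hinv : ∀ x ∈ S, A.transpose.mulVec x ∈ S := by
      intro x hx
      rw [hmem] at hx ⊢
      intro k
      have h2 : (A.transpose ^ (k : ℕ)).mulVec (A.transpose.mulVec x)
          = (A.transpose ^ ((k : ℕ) + 1)).mulVec x := by
        rw [mulVec_mulVec, ← pow_succ]
      rw [h2]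
      rcases lt_or_eq_of_le (Nat.succ_le_of_lt k.isLt) with hlt | heq
      · simpa using hx ⟨(k : ℕ) + 1, hlt⟩
      · have hkN : (k : ℕ) + 1 = N := heq
        rw [hkN, kalman_aux_pow_card, kalman_aux_sum_mulVec, ← mulVecLin_apply, map_sum]
        refine Finset.sum_eq_zero fun i hi => ?_
        rw [Finset.mem_range] at hi
        rw [smul_mulVec, _root_.map_smul, mulVecLin_apply]
        have h6 : D.transpose.mulVec ((A.transpose ^ i).mulVec x) = 0 := by
          simpa using hx ⟨i, hi⟩
        rw [h6, smul_zero]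
    have hSD : S ≤ LinearMap.ker D.transpose.mulVecLin := by
      intro x hx
      rw [hmem] at hx
      rw [LinearMap.mem_ker, mulVecLin_apply]
      rcases Nat.eq_zero_or_pos N with h0 | h0
      · subst h0
        have hx0 : x = 0 := funext fun i => i.elim0
        simp [hx0]
      · simpa using hx ⟨0, h0⟩
    have := h S hSD hinv
    omega
end

section
/- Let A, B be N×N real matrices, D an N×M real matrix, and 𝓡 the enlarged Kalman matrix. If Ker(𝓡ᵀ) = {0}, then for any joint eigenspace V = {x : Aᵀx = αx, Bᵀx = βx} (α, β scalars), we have Ker(Dᵀ) ∩ V = {0}, and hence dim V ≤ rank(D). -/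
open Matrix

lemma wordProd_smul {R : Type} [CommRing R] {n : ℕ}
    (A B : Matrix (Fin n) (Fin n) R) (x : Fin n → R) (α β : R)
    (hA : A *ᵥ x = α • x) (hB : B *ᵥ x = β • x) (w : List Bool) :
    ∃ c : R, wordProd A B w *ᵥ x = c • x := by
  induction w with
  | nil => exact ⟨1, by simp [wordProd]⟩
  | cons b t ih =>
    obtain ⟨c, hc⟩ := ih
    have : wordProd A B (b :: t) = (if b then A else B) * wordProd A B t := by
      simp [wordProd]
    refine ⟨(if b then α else β) * c, ?_⟩
    rw [this, ← mulVec_mulVec, hc, mulVec_smul]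
    cases b <;> simp [hA, hB, smul_smul, mul_comm]

/-- if `Ker(𝓡ᵀ) = {0}`, then for any joint eigenspace
`V = {x : Aᵀx = αx, Bᵀx = βx}` one has `Ker(Dᵀ) ∩ V = {0}` and `dim V ≤ rank D`. -/
theorem kerD_inter_eigenspace_eq_bot {N M : ℕ}
    (A B : Matrix (Fin N) (Fin N) ℝ) (D : Matrix (Fin N) (Fin M) ℝ)
    (h : kalmanKer A B D = ⊥) (α β : ℝ) :
    LinearMap.ker D.transpose.mulVecLin ⊓
        (LinearMap.ker (A.transpose.mulVecLin - α • LinearMap.id) ⊓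
          LinearMap.ker (B.transpose.mulVecLin - β • LinearMap.id)) = ⊥ ∧
      Module.finrank ℝ
        (LinearMap.ker (A.transpose.mulVecLin - α • LinearMap.id) ⊓
          LinearMap.ker (B.transpose.mulVecLin - β • LinearMap.id) :
          Submodule ℝ (Fin N → ℝ)) ≤ D.rank := by
  set V : Submodule ℝ (Fin N → ℝ) :=
    LinearMap.ker (A.transpose.mulVecLin - α • LinearMap.id) ⊓
      LinearMap.ker (B.transpose.mulVecLin - β • LinearMap.id) with hV
  have key : LinearMap.ker D.transpose.mulVecLin ⊓ V = ⊥ := by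
    rw [eq_bot_iff]
    intro x hx
    have hD : D.transpose *ᵥ x = 0 := hx.1
    have hA : A.transpose *ᵥ x = α • x := by
      have := LinearMap.mem_ker.mp hx.2.1
      simp only [LinearMap.mem_ker, LinearMap.sub_apply, LinearMap.smul_apply,
        LinearMap.id_apply, sub_eq_zero, mulVecLin_apply] at this
      exact this
    have hB : B.transpose *ᵥ x = β • x := by
      have := LinearMap.mem_ker.mp hx.2.2
      simp only [LinearMap.mem_ker, LinearMap.sub_apply, LinearMap.smul_apply,
        LinearMap.id_apply, sub_eq_zero, mulVecLin_apply] at this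
      exact this
    have : x ∈ kalmanKer A B D := by
      rw [kalmanKer, Submodule.mem_iInf]
      intro w
      obtain ⟨c, hc⟩ := wordProd_smul A.transpose B.transpose x α β hA hB w
      rw [LinearMap.mem_ker]
      simp only [LinearMap.comp_apply, mulVecLin_apply, hc, mulVec_smul, hD, smul_zero]
    rw [h] at this
    exact this
  refine ⟨key, ?_⟩
  -- the restriction of Dᵀ to V is injective
  set f : V →ₗ[ℝ] (Fin M → ℝ) := D.transpose.mulVecLin.domRestrict V with hf
  have hker : LinearMap.ker f = ⊥ := by
    rw [eq_bot_iff]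
    rintro ⟨x, hxV⟩ hx
    have hx0 : x ∈ LinearMap.ker D.transpose.mulVecLin ⊓ V :=
      ⟨by simpa [hf, LinearMap.mem_ker] using hx, hxV⟩
    rw [key] at hx0
    simpa using hx0
  have h1 : Module.finrank ℝ V = Module.finrank ℝ (LinearMap.range f) := by
    have := LinearMap.finrank_range_add_finrank_ker f
    rw [hker] at this
    simpa using this.symm
  have h2 : LinearMap.range f ≤ LinearMap.range D.transpose.mulVecLin := by
    rintro y ⟨x, rfl⟩
    exact ⟨x, rfl⟩
  calc Module.finrank ℝ V = Module.finrank ℝ (LinearMap.range f) := h1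
    _ ≤ Module.finrank ℝ (LinearMap.range D.transpose.mulVecLin) :=
        Submodule.finrank_mono h2
    _ = D.transpose.rank := rfl
    _ = D.rank := rank_transpose D
end

section
/- Let C_p be a full row-rank (N−p)×N real matrix and A an N×N real matrix with A·Ker(C_p) ⊆ Ker(C_p). If A is similar to a symmetric matrix (i.e., A is diagonalizable over ℝ with real eigenvalues), then the reduced matrix Ā_p = C_pAC_pᵀ(C_pC_pᵀ)^{-1} is also similar to a symmetric matrix. -/
open Matrix

private lemma isUnit_det_of_rank_eq_card {k : ℕ} (M : Matrix (Fin k) (Fin k) ℝ)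
    (h : M.rank = k) : IsUnit M.det := by
  rw [← isUnit_iff_isUnit_det, ← mulVec_surjective_iff_isUnit]
  have hrange : LinearMap.range M.mulVecLin = ⊤ := by
    apply Submodule.eq_top_of_finrank_eq
    rw [← Matrix.rank, h]
    simp
  intro v
  obtain ⟨w, hw⟩ := LinearMap.range_eq_top.mp hrange v
  exact ⟨w, hw⟩

private lemma transpose_sandwich_symm {k n : ℕ} (D : Matrix (Fin k) (Fin n) ℝ)
    (S : Matrix (Fin n) (Fin n) ℝ) (hS : Sᵀ = S) : (D * S * Dᵀ)ᵀ = D * S * Dᵀ := by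
  simp [Matrix.transpose_mul, Matrix.mul_assoc, hS]

open scoped MatrixOrder in
private noncomputable def Matrix.PosSemidef.sqrt {k : ℕ} {M : Matrix (Fin k) (Fin k) ℝ}
    (_h : M.PosSemidef) : Matrix (Fin k) (Fin k) ℝ := CFC.sqrt M

open scoped MatrixOrder in
private lemma Matrix.PosSemidef.sqrt_mul_self {k : ℕ} {M : Matrix (Fin k) (Fin k) ℝ}
    (h : M.PosSemidef) : h.sqrt * h.sqrt = M := CFC.sqrt_mul_sqrt_self M h.nonneg

open scoped MatrixOrder in
private lemma Matrix.PosSemidef.posSemidef_sqrt {k : ℕ} {M : Matrix (Fin k) (Fin k) ℝ}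
    (h : M.PosSemidef) : h.sqrt.PosSemidef := Matrix.nonneg_iff_posSemidef.mp (CFC.sqrt_nonneg M)

/-- A real square matrix is similar to a symmetric matrix. -/
def SimilarToSymm {n : ℕ} (A : Matrix (Fin n) (Fin n) ℝ) : Prop :=
  ∃ P S : Matrix (Fin n) (Fin n) ℝ, IsUnit P.det ∧ S.transpose = S ∧ A = P * S * P⁻¹

private lemma similarToSymm_symm_mul_inv_sq {k : ℕ} (M R : Matrix (Fin k) (Fin k) ℝ)
    (hM : Mᵀ = M) (hRs : Rᵀ = R) (hRdet : IsUnit R.det) :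
    SimilarToSymm (M * (R * R)⁻¹) := by
  refine ⟨R, R⁻¹ * M * R⁻¹, hRdet, ?_, ?_⟩
  · simp [Matrix.transpose_mul, Matrix.transpose_nonsing_inv, hRs, hM, Matrix.mul_assoc]
  · rw [Matrix.mul_inv_rev]
    have h : R * (R⁻¹ * M * R⁻¹) = M * R⁻¹ := by
      rw [← Matrix.mul_assoc, ← Matrix.mul_assoc, Matrix.mul_nonsing_inv _ hRdet,
        Matrix.one_mul]
    rw [h, Matrix.mul_assoc]

/-- if `A·Ker(C_p) ⊆ Ker(C_p)` and `A` is similar to a symmetric matrix,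
then the reduced matrix `Ā_p = C_pAC_pᵀ(C_pC_pᵀ)⁻¹` is also similar to a symmetric
matrix. -/
theorem reduced_similar_to_symm {N p : ℕ} (hp : p ≤ N)
    (C : Matrix (Fin (N - p)) (Fin N) ℝ) (hrank : C.rank = N - p)
    (A : Matrix (Fin N) (Fin N) ℝ)
    (hinv : ∀ x ∈ LinearMap.ker C.mulVecLin, A.mulVec x ∈ LinearMap.ker C.mulVecLin)
    (hA : SimilarToSymm A) :
    SimilarToSymm (C * A * C.transpose * (C * C.transpose)⁻¹) := by
  obtain ⟨P, S, hP, hS, hAPS⟩ := hA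
  -- invertibility of C * Cᵀ
  have hCCt : IsUnit (C * Cᵀ).det := by
    apply isUnit_det_of_rank_eq_card
    rw [rank_self_mul_transpose, hrank]
  -- the projector onto ker C
  have hCQ : C * (1 - Cᵀ * (C * Cᵀ)⁻¹ * C) = 0 := by
    rw [Matrix.mul_sub, Matrix.mul_one]
    have h : C * (Cᵀ * (C * Cᵀ)⁻¹ * C) = (C * Cᵀ) * (C * Cᵀ)⁻¹ * C := by
      simp only [Matrix.mul_assoc]
    rw [h, Matrix.mul_nonsing_inv _ hCCt, Matrix.one_mul, sub_self]
  have hCAQ : C * A * (1 - Cᵀ * (C * Cᵀ)⁻¹ * C) = 0 := by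
    ext i j
    have h1 : (1 - Cᵀ * (C * Cᵀ)⁻¹ * C).mulVec (Pi.single j 1) ∈
        LinearMap.ker C.mulVecLin := by
      rw [LinearMap.mem_ker, mulVecLin_apply, mulVec_mulVec, hCQ]
      exact Matrix.zero_mulVec _
    have h2 := hinv _ h1
    rw [LinearMap.mem_ker, mulVecLin_apply, mulVec_mulVec, mulVec_mulVec] at h2
    simpa [Matrix.mulVec_single] using congrFun h2 i
  -- the intertwining relation  C A = Abar C
  have hinter : C * A = (C * A * Cᵀ * (C * Cᵀ)⁻¹) * C := by
    have h : C * A * (1 - Cᵀ * (C * Cᵀ)⁻¹ * C)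
        = C * A - (C * A * Cᵀ * (C * Cᵀ)⁻¹) * C := by
      rw [Matrix.mul_sub, Matrix.mul_one]
      simp only [Matrix.mul_assoc]
    rw [h] at hCAQ
    exact sub_eq_zero.mp hCAQ
  -- transfer via D = C * P
  have hAbarD : (C * A * Cᵀ * (C * Cᵀ)⁻¹) * (C * P) = (C * P) * S := by
    rw [← Matrix.mul_assoc, ← hinter, hAPS]
    calc C * (P * S * P⁻¹) * P = C * P * S * (P⁻¹ * P) := by
          simp only [Matrix.mul_assoc]
      _ = C * P * S := by rw [Matrix.nonsing_inv_mul _ hP, Matrix.mul_one]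
  have hKdet : IsUnit ((C * P) * (C * P)ᵀ).det := by
    apply isUnit_det_of_rank_eq_card
    rw [rank_self_mul_transpose, rank_mul_eq_left_of_isUnit_det _ _ hP, hrank]
  have hKps : ((C * P) * (C * P)ᵀ).PosSemidef := by
    have h := posSemidef_self_mul_conjTranspose (C * P)
    rwa [conjTranspose_eq_transpose_of_trivial] at h
  have hRR : hKps.sqrt * hKps.sqrt = (C * P) * (C * P)ᵀ := hKps.sqrt_mul_self
  have hRsymm : hKps.sqrtᵀ = hKps.sqrt := by
    have h := hKps.posSemidef_sqrt.isHermitian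
    rwa [Matrix.IsHermitian, conjTranspose_eq_transpose_of_trivial] at h
  have hRdet : IsUnit hKps.sqrt.det := by
    have h : IsUnit (hKps.sqrt.det * hKps.sqrt.det) := by
      rw [← Matrix.det_mul, hRR]; exact hKdet
    exact isUnit_of_mul_isUnit_left h
  have hAbarMK : C * A * Cᵀ * (C * Cᵀ)⁻¹
      = ((C * P) * S * (C * P)ᵀ) * (hKps.sqrt * hKps.sqrt)⁻¹ := by
    have h1 : (C * A * Cᵀ * (C * Cᵀ)⁻¹) * ((C * P) * (C * P)ᵀ)
        = (C * P) * S * (C * P)ᵀ := by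
      rw [← Matrix.mul_assoc, hAbarD]
    rw [hRR, ← h1, Matrix.mul_nonsing_inv_cancel_right _ _ hKdet]
  rw [hAbarMK]
  exact similarToSymm_symm_mul_inv_sq _ _ (transpose_sandwich_symm _ _ hS) hRsymm hRdet
end

section
/- Let A be an N×N real matrix whose restriction-compatible invariant subspace is Ker(C_p) for a full row-rank (N−p)×N matrix C_p (i.e., A·Ker(C_p) ⊆ Ker(C_p)), with reduced matrix Ā_p. Suppose {x_l^{(k)}} (1 ≤ k ≤ d, 1 ≤ l ≤ r_k) is a complete system of Jordan chains for A (a basis of ℝᴺ with A x_l^{(k)} = λ_k x_l^{(k)} + x_{l+1}^{(k)}, x_{r_k+1}^{(k)} = 0), ordered so that for some integers d̄ ≤ d and r̄_k ≤ r_k the vectors {x_l^{(k)} : 1 ≤ k ≤ d̄, r̄_k+1 ≤ l ≤ r_k} span Ker(C_p). Then the nonzero projected vectors x̄_l^{(k)} = C_p x_l^{(k)} form a complete system of Jordan chains (a basis of ℝ^{N−p} of root vectors) of Ā_p. -/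
open Matrix

/-- let `C_p` be a full row-rank `(N−p) × N` matrix, `A·Ker(C_p) ⊆ Ker(C_p)`
with reduced matrix `Ā_p` (`C_pA = Ā_pC_p`). Let `{x k l : k < d, l < r k}` be a complete
system of Jordan chains of `A` (a basis of `ℝᴺ` with `A x_l = λ_k x_l + x_{l+1}`,
`x (r k) = 0`), ordered so that for some `r̄_k ≤ r_k` the tail vectors
`{x k l : r̄_k ≤ l < r_k}` span `Ker(C_p)`. Then the projected vectors
`x̄ k l = C_p (x k l)` for `l < r̄_k` form a complete system of Jordan chains of `Ā_p`
(a basis of `ℝ^{N−p}` of root vectors). -/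
theorem projected_root_system {N p : ℕ}
    (C : Matrix (Fin (N - p)) (Fin N) ℝ) (hrank : C.rank = N - p)
    (A : Matrix (Fin N) (Fin N) ℝ)
    (hinv : ∀ x ∈ LinearMap.ker C.mulVecLin, A.mulVec x ∈ LinearMap.ker C.mulVecLin)
    (Abar : Matrix (Fin (N - p)) (Fin (N - p)) ℝ) (hcomp : C * A = Abar * C)
    (d : ℕ) (r rbar : ℕ → ℕ) (lam : ℕ → ℝ) (x : ℕ → ℕ → (Fin N → ℝ))
    (hchain : ∀ k < d, ∀ l < r k, A.mulVec (x k l) = lam k • x k l + x k (l + 1))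
    (hend : ∀ k < d, x k (r k) = 0)
    (hli : LinearIndependent ℝ
      (fun kl : Σ k : Fin d, Fin (r k) => x (kl.1 : ℕ) (kl.2 : ℕ)))
    (hspan : Submodule.span ℝ
      (Set.range fun kl : Σ k : Fin d, Fin (r k) => x (kl.1 : ℕ) (kl.2 : ℕ)) = ⊤)
    (hle : ∀ k, rbar k ≤ r k)
    (hker : LinearMap.ker C.mulVecLin =
      Submodule.span ℝ {v | ∃ k < d, ∃ l, rbar k ≤ l ∧ l < r k ∧ v = x k l}) :
    LinearIndependent ℝ
        (fun kl : Σ k : Fin d, Fin (rbar k) => C.mulVec (x (kl.1 : ℕ) (kl.2 : ℕ))) ∧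
      Submodule.span ℝ
        (Set.range fun kl : Σ k : Fin d, Fin (rbar k) =>
          C.mulVec (x (kl.1 : ℕ) (kl.2 : ℕ))) = ⊤ ∧
      ∀ k < d, ∀ l < rbar k,
        Abar.mulVec (C.mulVec (x k l)) =
          lam k • C.mulVec (x k l) + C.mulVec (x k (l + 1)) := by
  classical
  set f := C.mulVecLin with hf
  set b : (Σ k : Fin d, Fin (r k)) → (Fin N → ℝ) :=
    fun kl => x (kl.1 : ℕ) (kl.2 : ℕ) with hb
  set e : (Σ k : Fin d, Fin (rbar k)) → (Σ k : Fin d, Fin (r k)) :=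
    fun j => ⟨j.1, ⟨(j.2 : ℕ), lt_of_lt_of_le j.2.2 (hle j.1)⟩⟩ with he_def
  have he : Function.Injective e := by
    rintro ⟨k, l⟩ ⟨k', l'⟩ h
    obtain ⟨h1, h2⟩ := Sigma.mk.inj_iff.mp h
    subst h1
    have h3 := eq_of_heq h2
    have h4 : (l : ℕ) = (l' : ℕ) := by simpa [Fin.ext_iff] using h3
    exact Sigma.ext rfl (heq_of_eq (Fin.ext h4))
  -- surjectivity of f
  have hfsurj : LinearMap.range f = ⊤ := by
    apply Submodule.eq_top_of_finrank_eq
    unfold Matrix.rank at hrank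
    simpa using hrank
  -- the tail set equals b '' (range e)ᶜ
  have hS : {v | ∃ k < d, ∃ l, rbar k ≤ l ∧ l < r k ∧ v = x k l}
      = b '' (Set.range e)ᶜ := by
    ext v
    constructor
    · rintro ⟨k, hk, l, hl1, hl2, rfl⟩
      refine ⟨⟨⟨k, hk⟩, ⟨l, hl2⟩⟩, ?_, rfl⟩
      rintro ⟨⟨k', l'⟩, hj⟩
      obtain ⟨h1, h2⟩ := Sigma.mk.inj_iff.mp hj
      subst h1
      have h3 := eq_of_heq h2
      have h4 : (l' : ℕ) = l := by simpa [Fin.ext_iff] using h3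
      have h5 : (l' : ℕ) < rbar k := l'.2
      omega
    · rintro ⟨⟨⟨k, hk⟩, ⟨l, hl⟩⟩, hmem, rfl⟩
      refine ⟨k, hk, l, ?_, hl, rfl⟩
      by_contra hcon
      push_neg at hcon
      exact hmem ⟨⟨⟨k, hk⟩, ⟨l, hcon⟩⟩, rfl⟩
  have hrange : Set.range (b ∘ e) = b '' Set.range e := Set.range_comp b e
  -- tail vectors are in the kernel
  have hker' : ∀ kl : Σ k : Fin d, Fin (r k), kl ∉ Set.range e → f (b kl) = 0 := by
    intro kl hkl
    have : b kl ∈ LinearMap.ker f := by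
      rw [hker, hS]
      exact Submodule.subset_span ⟨kl, hkl, rfl⟩
    exact this
  -- linear independence
  have hLI : LinearIndependent ℝ (f ∘ (b ∘ e)) := by
    refine (hli.comp e he).map ?_
    rw [hrange, hker, hS]
    exact hli.disjoint_span_image disjoint_compl_right
  -- span
  have hSP : Submodule.span ℝ (Set.range (f ∘ (b ∘ e))) = ⊤ := by
    have hmap : Submodule.span ℝ (f '' Set.range b) = ⊤ := by
      rw [Submodule.span_image, hspan, Submodule.map_top, hfsurj]
    refine top_le_iff.mp ?_
    rw [← hmap]
    refine Submodule.span_le.mpr ?_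
    rintro _ ⟨_, ⟨kl, rfl⟩, rfl⟩
    by_cases hkl : kl ∈ Set.range e
    · obtain ⟨j, rfl⟩ := hkl
      exact Submodule.subset_span ⟨j, rfl⟩
    · rw [hker' kl hkl]
      exact Submodule.zero_mem _
  refine ⟨?_, ?_, ?_⟩
  · convert hLI using 1
    rfl
  · convert hSP using 2
    rfl
  · intro k hk l hl
    have h1 : C.mulVec (A.mulVec (x k l)) = Abar.mulVec (C.mulVec (x k l)) := by
      rw [Matrix.mulVec_mulVec, Matrix.mulVec_mulVec, hcomp]
    rw [hchain k hk l (lt_of_lt_of_le hl (hle k)), Matrix.mulVec_add,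
      Matrix.mulVec_smul] at h1
    exact h1.symm
end
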